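/- Let F be a proper subfield of a field K of characteristic 0. Let p(x) = Σ_{k=0}^n a_k x^k ∈ K[x] be nonconstant with a_n ≠ 0, and let q(x) = Σ_{j=0}^m b_j x^j ∈ K[x] with b_m ≠ 0, such that a_n ∈ F, b_m ∈ F, and b_j ∉ F for some j ≥ 1. Then the composition p ∘ q has some coefficient not in F, and D_F(p ∘ q) = D_F(q). -/

import Mathlib

open Polynomial

/-- The `F`-deficit of a polynomial `p`: `natDegree p` minus the largest index
of a coefficient not lying in `F`. When all coefficients lie in `F`, the set
below is empty, `sSup ∅ = 0`, and the deficit equals `natDegree p`. -/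
noncomputable def deficit {K : Type*} [Field K] (F : Subfield K) (p : K[X]) : ℕ :=
  p.natDegree - sSup {k : ℕ | p.coeff k ∉ F}

theorem stmt0 {K : Type*} [Field K] [CharZero K] (F : Subfield K) (hF : F ≠ ⊤)
    (p q : K[X]) (hp : 0 < p.natDegree) (hq : q ≠ 0)
    (hpl : p.leadingCoeff ∈ F) (hql : q.leadingCoeff ∈ F)
    (hj : ∃ j, 1 ≤ j ∧ q.coeff j ∉ F) :
    (∃ k, (p.comp q).coeff k ∉ F) ∧ deficit F (p.comp q) = deficit F q := by
  classical
  obtain ⟨j, hj1, hjF⟩ := hj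
  set S : Set ℕ := {k : ℕ | q.coeff k ∉ F} with hS
  have hSbdd : BddAbove S := ⟨q.natDegree, fun k hk => by
    by_contra h
    push_neg at h
    exact hk (by rw [coeff_eq_zero_of_natDegree_lt h]; exact F.zero_mem)⟩
  have hSne : S.Nonempty := ⟨j, hjF⟩
  set t := sSup S with htdef
  have htS : t ∈ S := Nat.sSup_mem hSne hSbdd
  have hbt : q.coeff t ∉ F := htS
  have hjt : j ≤ t := le_csSup hSbdd hjF
  have ht1 : 1 ≤ t := hj1.trans hjt
  have htm : t ≤ q.natDegree := by
    by_contra h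
    push_neg at h
    exact hbt (by rw [coeff_eq_zero_of_natDegree_lt h]; exact F.zero_mem)
  have hqm : q.coeff q.natDegree ∈ F := by rw [coeff_natDegree]; exact hql
  have htm' : t < q.natDegree := lt_of_le_of_ne htm (fun h => hbt (h ▸ hqm))
  have hhigh : ∀ k, t < k → q.coeff k ∈ F := by
    intro k hk
    by_contra h
    exact absurd (le_csSup hSbdd (show k ∈ S from h)) (not_le.mpr hk)
  -- Lemma A: high coefficients of q^i lie in F
  have hA : ∀ i k, i * q.natDegree + t < k + q.natDegree → (q ^ i).coeff k ∈ F := by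
    intro i
    induction i with
    | zero =>
      intro k hk
      simp only [pow_zero, coeff_one]
      split
      · exact F.one_mem
      · exact F.zero_mem
    | succ i ih =>
      intro k hk
      have e : (i + 1) * q.natDegree = i * q.natDegree + q.natDegree := Nat.succ_mul _ _
      rw [pow_succ, coeff_mul]
      refine sum_mem fun x hx => ?_
      rw [Finset.HasAntidiagonal.mem_antidiagonal] at hx
      rcases lt_or_ge q.natDegree x.2 with hb | hb
      · rw [show q.coeff x.2 = 0 from coeff_eq_zero_of_natDegree_lt (by omega), mul_zero]
        exact F.zero_mem
      · rcases lt_or_ge t x.2 with hb2 | hb2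
        · exact F.mul_mem (ih x.1 (by omega)) (hhigh _ hb2)
        · have hd : (q ^ i).natDegree < x.1 := by rw [natDegree_pow]; omega
          rw [coeff_eq_zero_of_natDegree_lt hd, zero_mul]
          exact F.zero_mem
  have hlead : ∀ i : ℕ, (q ^ i).coeff (i * q.natDegree) = q.leadingCoeff ^ i := by
    intro i
    have h1 : (q ^ i).natDegree = i * q.natDegree := by rw [natDegree_pow]
    rw [← h1, coeff_natDegree, leadingCoeff_pow]
  -- Lemma B: the key coefficient of q^(i+1)
  have hB : ∀ i : ℕ, ∃ c ∈ F, (q ^ (i + 1)).coeff (i * q.natDegree + t)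
      = (i + 1 : ℕ) * q.coeff t * q.leadingCoeff ^ i + c := by
    intro i
    induction i with
    | zero => exact ⟨0, F.zero_mem, by simp⟩
    | succ i ih =>
      obtain ⟨c, hc, hcoeff⟩ := ih
      have e : (i + 1) * q.natDegree = i * q.natDegree + q.natDegree := Nat.succ_mul _ _
      set f : ℕ × ℕ → K := fun x => (q ^ (i + 1)).coeff x.1 * q.coeff x.2 with hf
      set A := Finset.HasAntidiagonal.antidiagonal ((i + 1) * q.natDegree + t) with hAdef
      have hp1 : ((i + 1) * q.natDegree, t) ∈ A := by rw [hAdef, Finset.HasAntidiagonal.mem_antidiagonal]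
      have hp2 : (i * q.natDegree + t, q.natDegree) ∈ A.erase ((i + 1) * q.natDegree, t) := by
        rw [Finset.mem_erase, Finset.HasAntidiagonal.mem_antidiagonal]
        refine ⟨?_, by omega⟩
        intro hcontra
        rw [Prod.mk.injEq] at hcontra
        omega
      have hsum : (q ^ (i + 1 + 1)).coeff ((i + 1) * q.natDegree + t)
          = f ((i + 1) * q.natDegree, t) + (f (i * q.natDegree + t, q.natDegree)
            + ∑ x ∈ (A.erase ((i + 1) * q.natDegree, t)).erase (i * q.natDegree + t, q.natDegree),
              f x) := by
        rw [pow_succ, coeff_mul, ← Finset.add_sum_erase _ f hp1, ← Finset.add_sum_erase _ f hp2]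
      have hrest : ∑ x ∈ (A.erase ((i + 1) * q.natDegree, t)).erase
          (i * q.natDegree + t, q.natDegree), f x ∈ F := by
        refine sum_mem fun x hx => ?_
        obtain ⟨a, b⟩ := x
        rw [Finset.mem_erase, Finset.mem_erase, Finset.HasAntidiagonal.mem_antidiagonal] at hx
        obtain ⟨hne2, hne1, hxk⟩ := hx
        rw [Ne, Prod.mk.injEq, not_and] at hne2 hne1
        simp only [hf]
        rcases lt_or_ge q.natDegree b with hb | hb
        · rw [show q.coeff b = 0 from coeff_eq_zero_of_natDegree_lt (by omega), mul_zero]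
          exact F.zero_mem
        · rcases hb.lt_or_eq with hbm | hbm
          · rcases lt_or_ge t b with hb2 | hb2
            · exact F.mul_mem (hA (i + 1) a (by omega)) (hhigh _ hb2)
            · rcases hb2.lt_or_eq with hbt2 | hbt2
              · have hd : (q ^ (i + 1)).natDegree < a := by rw [natDegree_pow]; omega
                rw [coeff_eq_zero_of_natDegree_lt hd, zero_mul]
                exact F.zero_mem
              · exact absurd hbt2 (hne1 (by omega))
          · exact absurd hbm (hne2 (by omega))
      refine ⟨c * q.leadingCoeff + ∑ x ∈ (A.erase ((i + 1) * q.natDegree, t)).erase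
          (i * q.natDegree + t, q.natDegree), f x,
        F.add_mem (F.mul_mem hc hql) hrest, ?_⟩
      rw [hsum]
      have hf1 : f ((i + 1) * q.natDegree, t) = q.leadingCoeff ^ (i + 1) * q.coeff t := by
        simp only [hf]
        rw [hlead (i + 1)]
      have hf2 : f (i * q.natDegree + t, q.natDegree)
          = ((i + 1 : ℕ) * q.coeff t * q.leadingCoeff ^ i + c) * q.leadingCoeff := by
        simp only [hf]
        rw [hcoeff, coeff_natDegree]
      rw [hf1, hf2]
      push_cast
      ring
  -- coefficients of the composition
  have hco : ∀ k, (p.comp q).coeff k = ∑ i ∈ Finset.range (p.natDegree + 1),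
      p.coeff i * (q ^ i).coeff k := by
    intro k
    rw [comp, eval₂_eq_sum_range, finset_sum_coeff]
    exact Finset.sum_congr rfl fun i _ => coeff_C_mul _
  obtain ⟨N, hN⟩ : ∃ N, p.natDegree = N + 1 := ⟨p.natDegree - 1, by omega⟩
  have hNm : (N + 1) * q.natDegree = N * q.natDegree + q.natDegree := Nat.succ_mul _ _
  have hsmall : ∀ i, i ≤ N → ∀ k, N * q.natDegree + t ≤ k → (q ^ i).coeff k = 0 := by
    intro i hi k hk
    apply coeff_eq_zero_of_natDegree_lt
    rw [natDegree_pow]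
    have := Nat.mul_le_mul_right q.natDegree hi
    omega
  have hcK0 : ∀ k, N * q.natDegree + t ≤ k →
      (p.comp q).coeff k = p.coeff (N + 1) * (q ^ (N + 1)).coeff k := by
    intro k hk
    rw [hco, hN]
    refine Finset.sum_eq_single_of_mem (N + 1) (Finset.self_mem_range_succ _) fun i hi hne => ?_
    rw [Finset.mem_range] at hi
    rw [hsmall i (by omega) k hk, mul_zero]
  have hanF : p.coeff (N + 1) ∈ F := by rw [← hN, coeff_natDegree]; exact hpl
  have hp0 : p ≠ 0 := fun h => by simp [h] at hp
  have han0 : p.coeff (N + 1) ≠ 0 := by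
    rw [← hN, coeff_natDegree]
    exact leadingCoeff_ne_zero.mpr hp0
  have hupper : ∀ k, N * q.natDegree + t < k → (p.comp q).coeff k ∈ F := by
    intro k hk
    rw [hcK0 k hk.le]
    exact F.mul_mem hanF (hA (N + 1) k (by omega))
  obtain ⟨c, hc, hcf⟩ := hB N
  have hK0notF : (p.comp q).coeff (N * q.natDegree + t) ∉ F := by
    rw [hcK0 _ le_rfl, hcf]
    intro hmem
    have h1 : ((N + 1 : ℕ) * q.coeff t * q.leadingCoeff ^ N + c : K) ∈ F := by
      have h := F.mul_mem (F.inv_mem hanF) hmem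
      rwa [inv_mul_cancel_left₀ han0] at h
    have h2 : ((N + 1 : ℕ) * q.coeff t * q.leadingCoeff ^ N : K) ∈ F := by
      have h3 := F.sub_mem h1 hc
      rwa [add_sub_cancel_right] at h3
    have hnz : ((N + 1 : ℕ) : K) ≠ 0 := Nat.cast_ne_zero.mpr (Nat.succ_ne_zero N)
    have hlnz : q.leadingCoeff ^ N ≠ 0 := pow_ne_zero _ (leadingCoeff_ne_zero.mpr hq)
    have hkey : (((N + 1 : ℕ) : K))⁻¹ * (q.leadingCoeff ^ N)⁻¹
        * ((N + 1 : ℕ) * q.coeff t * q.leadingCoeff ^ N) = q.coeff t := by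
      rw [show (((N + 1 : ℕ) : K))⁻¹ * (q.leadingCoeff ^ N)⁻¹
          * ((N + 1 : ℕ) * q.coeff t * q.leadingCoeff ^ N)
          = ((((N + 1 : ℕ) : K))⁻¹ * ((N + 1 : ℕ) : K))
            * ((q.leadingCoeff ^ N)⁻¹ * q.leadingCoeff ^ N) * q.coeff t from by ring,
        inv_mul_cancel₀ hnz, inv_mul_cancel₀ hlnz, one_mul, one_mul]
    have h4 := F.mul_mem (F.mul_mem (F.inv_mem (natCast_mem F (N + 1)))
      (F.inv_mem (F.pow_mem hql N))) h2
    rw [hkey] at h4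
    exact hbt h4
  refine ⟨⟨N * q.natDegree + t, hK0notF⟩, ?_⟩
  have hS2sup : sSup {k : ℕ | (p.comp q).coeff k ∉ F} = N * q.natDegree + t := by
    have hbnd : ∀ k ∈ {k : ℕ | (p.comp q).coeff k ∉ F}, k ≤ N * q.natDegree + t := by
      intro k hk
      by_contra h
      push_neg at h
      exact hk (hupper k h)
    exact le_antisymm (csSup_le ⟨N * q.natDegree + t, hK0notF⟩ hbnd)
      (le_csSup ⟨N * q.natDegree + t, hbnd⟩ hK0notF)
  rw [deficit, deficit, hS2sup, natDegree_comp, ← hS, ← htdef, hN]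
  omega
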